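/- Let R and F be C¹ positive real functions defined near κ ∈ ℝ, let Ê > 0, and let A₊(ε), A₋(ε) be continuous functions on (−ε₀, ε₀) with A₊(0) = √(2Ê/F(κ)) = −A₋(0), satisfying 2Ê − F(κ − εA_±(ε))A_±(ε)² = 0 with these roots simple. Define T(ε) = 2·∫_{A₋(ε)}^{A₊(ε)} du / (√(R(κ − εu)) · √(2Ê − F(κ − εu)u²)) (a convergent improper integral for all sufficiently small |ε|). Then lim_{ε→0} T(ε) = 2π/√(R(κ)F(κ)). -/

import Mathlib

open Real MeasureTheory Filter Topology

lemma aux_II : IntervalIntegrable (fun t : ℝ => (Real.sqrt (1 - t ^ 2))⁻¹) volume (-1) 1 := by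
  have h1 : IntervalIntegrable (fun x : ℝ => x ^ (-(1/2) : ℝ)) volume 2 0 :=
    (intervalIntegral.intervalIntegrable_rpow' (by norm_num)).symm
  have h2 : IntervalIntegrable (fun x : ℝ => x ^ (-(1/2) : ℝ)) volume 0 2 :=
    intervalIntegral.intervalIntegrable_rpow' (by norm_num)
  have hA : IntervalIntegrable (fun t : ℝ => (1 - t) ^ (-(1/2) : ℝ)) volume (-1) 1 := by
    have := h1.comp_sub_left 1
    norm_num at this
    exact this
  have hB : IntervalIntegrable (fun t : ℝ => (1 + t) ^ (-(1/2) : ℝ)) volume (-1) 1 := by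
    have := h2.comp_add_left 1
    norm_num at this
    exact this
  refine (hA.add hB).mono_fun' ?_ ?_
  · exact ((continuous_const.sub (continuous_pow 2)).sqrt.measurable.inv).aestronglyMeasurable
  · refine ae_restrict_of_forall_mem measurableSet_uIoc fun t ht => ?_
    have ht' : t ∈ Set.Ioc (-1 : ℝ) 1 := by
      simpa [Set.uIoc_of_le (by norm_num : (-1:ℝ) ≤ 1)] using ht
    have h1t : (0:ℝ) ≤ 1 - t := by linarith [ht'.2]
    have h2t : (0:ℝ) < 1 + t := by linarith [ht'.1]
    have hfact : Real.sqrt (1 - t ^ 2) = Real.sqrt (1 - t) * Real.sqrt (1 + t) := by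
      rw [← Real.sqrt_mul h1t]; ring_nf
    have hre : ∀ x : ℝ, 0 ≤ x → x ^ (-(1/2) : ℝ) = (Real.sqrt x)⁻¹ := by
      intro x hx
      rw [Real.sqrt_eq_rpow, ← Real.rpow_neg hx]
    simp only [Real.norm_eq_abs]
    rw [abs_of_nonneg (by positivity), hfact, hre _ h1t, hre _ (le_of_lt h2t), mul_inv]
    rcases le_total t 0 with h | h
    · have hs1 : (1:ℝ) ≤ Real.sqrt (1 - t) := by
        nlinarith [Real.sq_sqrt (by linarith : (0:ℝ) ≤ 1 - t), Real.sqrt_nonneg (1 - t)]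
      have : (Real.sqrt (1 - t))⁻¹ * (Real.sqrt (1 + t))⁻¹ ≤ (Real.sqrt (1 + t))⁻¹ := by
        have hpos : (0:ℝ) ≤ (Real.sqrt (1 + t))⁻¹ := by positivity
        have : (Real.sqrt (1 - t))⁻¹ ≤ 1 := by
          apply inv_le_one_of_one_le₀ hs1
        nlinarith
      have hnn : (0:ℝ) ≤ (Real.sqrt (1 - t))⁻¹ := by positivity
      linarith
    · have hs1 : (1:ℝ) ≤ Real.sqrt (1 + t) := by
        nlinarith [Real.sq_sqrt (by linarith : (0:ℝ) ≤ 1 + t), Real.sqrt_nonneg (1 + t)]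
      have : (Real.sqrt (1 - t))⁻¹ * (Real.sqrt (1 + t))⁻¹ ≤ (Real.sqrt (1 - t))⁻¹ := by
        have hpos : (0:ℝ) ≤ (Real.sqrt (1 - t))⁻¹ := by positivity
        have : (Real.sqrt (1 + t))⁻¹ ≤ 1 := by
          apply inv_le_one_of_one_le₀ hs1
        nlinarith
      have hnn : (0:ℝ) ≤ (Real.sqrt (1 + t))⁻¹ := by positivity
      linarith

lemma aux_int : ∫ t in (-1:ℝ)..1, (Real.sqrt (1 - t ^ 2))⁻¹ = π := by
  have h := intervalIntegral.integral_eq_sub_of_hasDeriv_right_of_le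
    (f := Real.arcsin) (f' := fun t => (Real.sqrt (1 - t ^ 2))⁻¹)
    (by norm_num : (-1:ℝ) ≤ 1) (Real.continuous_arcsin.continuousOn)
    (fun x hx => by
      have := Real.hasDerivAt_arcsin (ne_of_gt hx.1) (ne_of_lt hx.2)
      rw [one_div] at this
      exact this.hasDerivWithinAt)
    aux_II
  rw [h, Real.arcsin_one, Real.arcsin_neg_one]
  ring

lemma aux_per (RR GG : ℝ → ℝ) (c₀ ρR : ℝ) (Q P : ℝ) (hQP : Q < P) (hc₀ : 0 < c₀) (hρR : 0 < ρR)
    (hRcont : ContinuousOn RR (Set.Icc Q P)) (hGcont : ContinuousOn GG (Set.Icc Q P))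
    (hRge : ∀ u ∈ Set.Icc Q P, ρR ≤ RR u)
    (hG : ∀ u ∈ Set.Icc Q P, c₀ * ((P - u) * (u - Q)) ≤ GG u)
    (hGP : GG P = 0) :
    IntervalIntegrable (fun u => (Real.sqrt (RR u) * Real.sqrt (GG u))⁻¹) volume Q P
    ∧ AEStronglyMeasurable
        (fun t => ((P - Q)/2) *
          (Real.sqrt (RR ((P + Q)/2 + (P - Q)/2 * t)) *
            Real.sqrt (GG ((P + Q)/2 + (P - Q)/2 * t)))⁻¹)
        (volume.restrict (Set.uIoc (-1:ℝ) 1))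
    ∧ (∀ t ∈ Set.uIoc (-1:ℝ) 1,
        ‖((P - Q)/2) *
          (Real.sqrt (RR ((P + Q)/2 + (P - Q)/2 * t)) *
            Real.sqrt (GG ((P + Q)/2 + (P - Q)/2 * t)))⁻¹‖
          ≤ (Real.sqrt ρR * Real.sqrt c₀)⁻¹ * (Real.sqrt (1 - t^2))⁻¹)
    ∧ (∫ u in Q..P, (Real.sqrt (RR u) * Real.sqrt (GG u))⁻¹)
        = ∫ t in (-1:ℝ)..1, ((P - Q)/2) *
            (Real.sqrt (RR ((P + Q)/2 + (P - Q)/2 * t)) *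
              Real.sqrt (GG ((P + Q)/2 + (P - Q)/2 * t)))⁻¹ := by
  set mm : ℝ := (P - Q)/2 with hm_def
  set ccv : ℝ := (P + Q)/2 with hcc_def
  have hm : (0:ℝ) < mm := by rw [hm_def]; linarith
  have hQ' : ccv - mm = Q := by rw [hm_def, hcc_def]; ring
  have hP' : ccv + mm = P := by rw [hm_def, hcc_def]; ring
  have hmem : ∀ t ∈ Set.Icc (-1:ℝ) 1, ccv + mm * t ∈ Set.Icc Q P := by
    intro t ht
    constructor <;> nlinarith [ht.1, ht.2]
  have hsub : Set.uIoc (-1:ℝ) 1 ⊆ Set.Icc (-1:ℝ) 1 := by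
    rw [Set.uIoc_of_le (by norm_num : (-1:ℝ) ≤ 1)]
    exact Set.Ioc_subset_Icc_self
  have hinner : Continuous (fun t : ℝ => ccv + mm * t) := by continuity
  have hmaps : Set.MapsTo (fun t : ℝ => ccv + mm * t)
      (Set.Icc (-1:ℝ) 1) (Set.Icc Q P) := hmem
  -- continuity of the denominator in t
  have hcontD : ContinuousOn
      (fun t => Real.sqrt (RR (ccv + mm * t)) *
        Real.sqrt (GG (ccv + mm * t))) (Set.Icc (-1:ℝ) 1) := by
    have h1 : ContinuousOn (fun t => RR (ccv + mm * t)) (Set.Icc (-1:ℝ) 1) :=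
      hRcont.comp hinner.continuousOn hmaps
    have h2 : ContinuousOn (fun t => GG (ccv + mm * t)) (Set.Icc (-1:ℝ) 1) :=
      hGcont.comp hinner.continuousOn hmaps
    exact (Real.continuous_sqrt.comp_continuousOn h1).mul
      (Real.continuous_sqrt.comp_continuousOn h2)
  -- measurability
  have hmeas : AEStronglyMeasurable
      (fun t => mm *
        (Real.sqrt (RR (ccv + mm * t)) *
          Real.sqrt (GG (ccv + mm * t)))⁻¹)
      (volume.restrict (Set.uIoc (-1:ℝ) 1)) := by
    have hD : AEMeasurable
        (fun t => Real.sqrt (RR (ccv + mm * t)) *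
          Real.sqrt (GG (ccv + mm * t)))
        (volume.restrict (Set.uIoc (-1:ℝ) 1)) :=
      (hcontD.mono hsub).aemeasurable measurableSet_uIoc
    exact ((measurable_inv.comp_aemeasurable hD).const_mul _).aestronglyMeasurable
  -- the pointwise bound
  have hbd : ∀ t ∈ Set.uIoc (-1:ℝ) 1,
      ‖mm *
        (Real.sqrt (RR (ccv + mm * t)) *
          Real.sqrt (GG (ccv + mm * t)))⁻¹‖
        ≤ (Real.sqrt ρR * Real.sqrt c₀)⁻¹ * (Real.sqrt (1 - t^2))⁻¹ := by
    intro t ht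
    have ht' : t ∈ Set.Ioc (-1:ℝ) 1 := by
      rwa [Set.uIoc_of_le (by norm_num : (-1:ℝ) ≤ 1)] at ht
    rcases eq_or_lt_of_le ht'.2 with rfl | htlt
    · -- t = 1 : everything is zero
      have hP1 : ccv + mm * 1 = P := by linarith
      rw [hP1, hGP]
      simp
    · -- -1 < t < 1
      set u : ℝ := ccv + mm * t with hu_def
      have huI : u ∈ Set.Icc Q P := hmem t ⟨le_of_lt ht'.1, le_of_lt htlt⟩
      have hGu : c₀ * ((P - u) * (u - Q)) ≤ GG u := hG u huI
      have hPu : P - u = mm * (1 - t) := by rw [hu_def]; nlinarith [hP']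
      have huQ : u - Q = mm * (1 + t) := by rw [hu_def]; nlinarith [hQ']
      have h1t : (0:ℝ) < 1 - t := by linarith
      have h2t : (0:ℝ) < 1 + t := by linarith [ht'.1]
      have hGu' : c₀ * (mm^2 * (1 - t^2)) ≤ GG u := by
        calc c₀ * (mm^2 * (1 - t^2)) = c₀ * ((P - u) * (u - Q)) := by
              rw [hPu, huQ]; ring
          _ ≤ GG u := hGu
      have hsq : Real.sqrt (c₀ * (mm^2 * (1 - t^2)))
          = Real.sqrt c₀ * (mm * Real.sqrt (1 - t^2)) := by
        rw [Real.sqrt_mul hc₀.le, Real.sqrt_mul (sq_nonneg _), Real.sqrt_sq hm.le]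
      have hDG : Real.sqrt c₀ * (mm * Real.sqrt (1 - t^2)) ≤ Real.sqrt (GG u) := by
        rw [← hsq]; exact Real.sqrt_le_sqrt hGu'
      have hDR : Real.sqrt ρR ≤ Real.sqrt (RR u) := Real.sqrt_le_sqrt (hRge u huI)
      have h1t2 : (0:ℝ) < 1 - t^2 := by nlinarith
      have hd₀ : (0:ℝ) < Real.sqrt ρR * (Real.sqrt c₀ * (mm * Real.sqrt (1 - t^2))) := by
        have e1 := Real.sqrt_pos.2 hρR
        have e2 := Real.sqrt_pos.2 hc₀
        have e3 := Real.sqrt_pos.2 h1t2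
        positivity
      have hden : Real.sqrt ρR * (Real.sqrt c₀ * (mm * Real.sqrt (1 - t^2)))
          ≤ Real.sqrt (RR u) * Real.sqrt (GG u) := by
        apply mul_le_mul hDR hDG (le_of_lt (by positivity)) (Real.sqrt_nonneg _)
      have hinv : (Real.sqrt (RR u) * Real.sqrt (GG u))⁻¹
          ≤ (Real.sqrt ρR * (Real.sqrt c₀ * (mm * Real.sqrt (1 - t^2))))⁻¹ :=
        inv_anti₀ hd₀ hden
      have hnn : (0:ℝ) ≤ (Real.sqrt (RR u) * Real.sqrt (GG u))⁻¹ := by positivity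
      rw [Real.norm_eq_abs, abs_of_nonneg (by positivity)]
      calc mm * (Real.sqrt (RR u) * Real.sqrt (GG u))⁻¹
          ≤ mm * (Real.sqrt ρR * (Real.sqrt c₀ * (mm * Real.sqrt (1 - t^2))))⁻¹ :=
            by exact mul_le_mul_of_nonneg_left hinv hm.le
        _ = (Real.sqrt ρR * Real.sqrt c₀)⁻¹ * (Real.sqrt (1 - t^2))⁻¹ := by
            have hs : Real.sqrt (1 - t^2) ≠ 0 := ne_of_gt (Real.sqrt_pos.2 h1t2)
            have hsρ : Real.sqrt ρR ≠ 0 := ne_of_gt (Real.sqrt_pos.2 hρR)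
            have hsc : Real.sqrt c₀ ≠ 0 := ne_of_gt (Real.sqrt_pos.2 hc₀)
            have hmne : mm ≠ 0 := ne_of_gt hm
            field_simp
  -- integrability of the substituted function
  have hHint : IntervalIntegrable
      (fun t => mm *
        (Real.sqrt (RR (ccv + mm * t)) *
          Real.sqrt (GG (ccv + mm * t)))⁻¹) volume (-1) 1 := by
    refine (aux_II.const_mul ((Real.sqrt ρR * Real.sqrt c₀)⁻¹)).mono_fun' hmeas ?_
    exact ae_restrict_of_forall_mem measurableSet_uIoc hbd
  -- transfer integrability through the affine substitution
  have hmne : (mm : ℝ) ≠ 0 := ne_of_gt hm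
  have hfint : IntervalIntegrable (fun u => (Real.sqrt (RR u) * Real.sqrt (GG u))⁻¹) volume Q P := by
    have h1 := hHint.comp_mul_left (c := mm⁻¹)
    have h2 := h1.comp_sub_right ccv
    have hend1 : (-1) / mm⁻¹ + ccv = Q := by
      rw [div_eq_mul_inv, inv_inv]; linarith
    have hend2 : (1:ℝ) / mm⁻¹ + ccv = P := by
      rw [div_eq_mul_inv, inv_inv]; linarith
    rw [hend1, hend2] at h2
    have h3 := h2.const_mul (mm⁻¹)
    have hfeq : (fun x => mm⁻¹ * (mm *
        (Real.sqrt (RR (ccv + mm * (mm⁻¹ * (x - ccv)))) *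
          Real.sqrt (GG (ccv + mm * (mm⁻¹ * (x - ccv)))))⁻¹))
        = fun u => (Real.sqrt (RR u) * Real.sqrt (GG u))⁻¹ := by
      funext x
      rw [show ccv + mm * (mm⁻¹ * (x - ccv)) = x by field_simp; ring]
      rw [← mul_assoc, inv_mul_cancel₀ hmne, one_mul]
    rwa [hfeq] at h3
  refine ⟨hfint, hmeas, hbd, ?_⟩
  -- the change of variables for the value
  rw [intervalIntegral.integral_const_mul]
  rw [intervalIntegral.integral_comp_add_mul
    (fun u => (Real.sqrt (RR u) * Real.sqrt (GG u))⁻¹) hmne ccv]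
  rw [show ccv + mm * (-1) = Q by linarith, show ccv + mm * 1 = P by linarith, smul_eq_mul,
    ← mul_assoc, mul_inv_cancel₀ hmne, one_mul]

set_option maxHeartbeats 4000000 in
/-- The period `T(ε) = 2∫_{A₋(ε)}^{A₊(ε)} du/(√(R(κ−εu))√(2Ê−F(κ−εu)u²))`
of the latitude oscillation tends to `2π/√(R(κ)F(κ))` as `ε → 0`; the integral is a
convergent improper integral for all sufficiently small `|ε|`. -/
theorem stmt_7 (R F : ℝ → ℝ) (U : Set ℝ) (hU : IsOpen U) (κ : ℝ) (hκ : κ ∈ U)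
    (hR : ContDiffOn ℝ 1 R U) (hF : ContDiffOn ℝ 1 F U)
    (hRpos : ∀ x ∈ U, 0 < R x) (hFpos : ∀ x ∈ U, 0 < F x)
    (E : ℝ) (hE : 0 < E) (ε₀ : ℝ) (hε₀ : 0 < ε₀) (Ap Am : ℝ → ℝ)
    (hApc : ContinuousOn Ap (Set.Ioo (-ε₀) ε₀)) (hAmc : ContinuousOn Am (Set.Ioo (-ε₀) ε₀))
    (hAp0 : Ap 0 = Real.sqrt (2 * E / F κ)) (hAm0 : Am 0 = -Real.sqrt (2 * E / F κ))
    (hroots : ∀ ε ∈ Set.Ioo (-ε₀) ε₀,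
      2 * E - F (κ - ε * Ap ε) * (Ap ε) ^ 2 = 0
      ∧ 2 * E - F (κ - ε * Am ε) * (Am ε) ^ 2 = 0
      ∧ deriv (fun u => 2 * E - F (κ - ε * u) * u ^ 2) (Ap ε) ≠ 0
      ∧ deriv (fun u => 2 * E - F (κ - ε * u) * u ^ 2) (Am ε) ≠ 0) :
    (∀ᶠ ε in 𝓝 (0 : ℝ), IntervalIntegrable
        (fun u => (Real.sqrt (R (κ - ε * u)) * Real.sqrt (2 * E - F (κ - ε * u) * u ^ 2))⁻¹)
        volume (Am ε) (Ap ε))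
    ∧ Tendsto
        (fun ε => 2 * ∫ u in (Am ε)..(Ap ε),
          (Real.sqrt (R (κ - ε * u)) * Real.sqrt (2 * E - F (κ - ε * u) * u ^ 2))⁻¹)
        (𝓝 0) (𝓝 (2 * π / Real.sqrt (R κ * F κ))) := by
  have hFκ : 0 < F κ := hFpos κ hκ
  have hRκ : 0 < R κ := hRpos κ hκ
  set a : ℝ := Real.sqrt (2 * E / F κ) with ha_def
  have ha : 0 < a := Real.sqrt_pos.2 (div_pos (by linarith) hFκ)
  have ha2 : F κ * a ^ 2 = 2 * E := by
    rw [ha_def, Real.sq_sqrt (le_of_lt (div_pos (by linarith) hFκ))]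
    field_simp
  obtain ⟨r, hr, hKU⟩ : ∃ r > 0, Metric.closedBall κ r ⊆ U := by
    simpa using Metric.nhds_basis_closedBall.mem_iff.1 (hU.mem_nhds hκ)
  have hκK : κ ∈ Metric.closedBall κ r := Metric.mem_closedBall_self hr.le
  have hKc : IsCompact (Metric.closedBall κ r) := isCompact_closedBall κ r
  obtain ⟨xR, hxRK, hxRmin⟩ := hKc.exists_isMinOn ⟨κ, hκK⟩ (hR.continuousOn.mono hKU)
  obtain ⟨xF, hxFK, hxFmin⟩ := hKc.exists_isMinOn ⟨κ, hκK⟩ (hF.continuousOn.mono hKU)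
  set ρR : ℝ := R xR with hρR_def
  set ρF : ℝ := F xF with hρF_def
  have hρR : 0 < ρR := hRpos xR (hKU hxRK)
  have hρF : 0 < ρF := hFpos xF (hKU hxFK)
  obtain ⟨M, hM⟩ := hKc.exists_bound_of_continuousOn
    ((hF.continuousOn_deriv_of_isOpen hU le_rfl).mono hKU)
  have hM0 : 0 ≤ M := le_trans (norm_nonneg _) (hM κ hκK)
  set η : ℝ := 7 * F κ / 20 with hη_def
  have hη : 0 < η := by rw [hη_def]; linarith
  obtain ⟨ρ, hρ, hρball⟩ := Metric.continuousAt_iff.1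
    (hF.continuousOn.continuousAt (hU.mem_nhds hκ)) η hη
  set c₁ : ℝ := a * ρF / 2 with hc₁_def
  have hc₁ : 0 < c₁ := by rw [hc₁_def]; positivity
  set c₂ : ℝ := 7 * F κ * a ^ 2 / 32 with hc₂_def
  have hc₂ : 0 < c₂ := by rw [hc₂_def]; positivity
  set c₀ : ℝ := min (c₁/(3*a)) (c₂/(9*a^2)) with hc₀_def
  have hc₀ : 0 < c₀ := lt_min (by positivity) (by positivity)
  have hc01 : c₀ * (3*a) ≤ c₁ := (le_div_iff₀ (by positivity)).1 (min_le_left _ _)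
  have hc02 : c₀ * (9*a^2) ≤ c₂ := (le_div_iff₀ (by positivity)).1 (min_le_right _ _)
  -- continuity of Ap, Am at 0
  have h0mem : (0:ℝ) ∈ Set.Ioo (-ε₀) ε₀ := ⟨by linarith, hε₀⟩
  have hApt : Tendsto Ap (𝓝 0) (𝓝 a) := by
    have h1 := hApc.continuousAt (isOpen_Ioo.mem_nhds h0mem)
    rw [ContinuousAt, hAp0] at h1
    exact h1
  have hAmt : Tendsto Am (𝓝 0) (𝓝 (-a)) := by
    have h1 := hAmc.continuousAt (isOpen_Ioo.mem_nhds h0mem)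
    rw [ContinuousAt, hAm0] at h1
    exact h1
  have hevP : ∀ᶠ ε in 𝓝 (0:ℝ), Ap ε ∈ Set.Ioo (a - a/4) (a + a/4) :=
    hApt (Ioo_mem_nhds (by linarith) (by linarith))
  have hevM : ∀ᶠ ε in 𝓝 (0:ℝ), Am ε ∈ Set.Ioo (-a - a/4) (-a + a/4) :=
    hAmt (Ioo_mem_nhds (by linarith) (by linarith))
  have hev0 : ∀ᶠ ε in 𝓝 (0:ℝ), ε ∈ Set.Ioo (-ε₀) ε₀ := by
    have h1 : Set.Ioo (-ε₀) ε₀ ∈ 𝓝 (0:ℝ) := Ioo_mem_nhds (by linarith) hε₀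
    exact Filter.eventually_of_mem h1 (fun x hx => hx)
  set εB : ℝ := min (r/(2*a)) (min (ρ/(2*a)) (a * ρF / (8*a^2*M + 1))) with hεB_def
  have hεB : 0 < εB := by
    refine lt_min (by positivity) (lt_min (by positivity) ?_)
    have : (0:ℝ) < 8*a^2*M + 1 := by positivity
    positivity
  have hsm : ∀ᶠ ε in 𝓝 (0:ℝ), |ε| < εB := by
    have h1 : Metric.ball (0:ℝ) εB ∈ 𝓝 (0:ℝ) := Metric.ball_mem_nhds _ hεB
    filter_upwards [h1] with ε hε
    simpa [Real.dist_eq] using hε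
  -- key quantitative estimates for small ε
  have key : ∀ᶠ ε in 𝓝 (0:ℝ),
      Am ε < Ap ε ∧
      (ContinuousOn (fun u => R (κ - ε * u)) (Set.Icc (Am ε) (Ap ε))) ∧
      (ContinuousOn (fun u => 2 * E - F (κ - ε * u) * u ^ 2) (Set.Icc (Am ε) (Ap ε))) ∧
      (∀ u ∈ Set.Icc (Am ε) (Ap ε), ρR ≤ R (κ - ε * u)) ∧
      (∀ u ∈ Set.Icc (Am ε) (Ap ε),
        c₀ * ((Ap ε - u) * (u - Am ε)) ≤ 2 * E - F (κ - ε * u) * u ^ 2) ∧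
      (2 * E - F (κ - ε * Ap ε) * (Ap ε) ^ 2 = 0) := by
    filter_upwards [hev0, hevP, hevM, hsm] with ε h0 hP hM' hs
    obtain ⟨hr1, hr2, -, -⟩ := hroots ε h0
    have hPa : a - a/4 < Ap ε := hP.1
    have hPb : Ap ε < a + a/4 := hP.2
    have hMa : -a - a/4 < Am ε := hM'.1
    have hMb : Am ε < -a + a/4 := hM'.2
    have hlt : Am ε < Ap ε := by linarith
    have habs : ∀ u ∈ Set.Icc (Am ε) (Ap ε), |u| ≤ 2*a := by
      intro u hu
      rw [abs_le]
      exact ⟨by linarith [hu.1], by linarith [hu.2]⟩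
    have hball : ∀ u : ℝ, |u| ≤ 2*a → κ - ε * u ∈ Metric.closedBall κ r := by
      intro u hu
      rw [Metric.mem_closedBall, Real.dist_eq,
        show κ - ε*u - κ = -(ε*u) by ring, abs_neg, abs_mul]
      have h1 : |ε| < r/(2*a) := lt_of_lt_of_le hs (min_le_left _ _)
      have h2 : |ε| * |u| ≤ |ε| * (2*a) := mul_le_mul_of_nonneg_left hu (abs_nonneg ε)
      have h3 : |ε| * (2*a) < r := (lt_div_iff₀ (by positivity)).1 h1
      linarith
    have hUin : ∀ u : ℝ, |u| ≤ 2*a → κ - ε * u ∈ U := fun u hu => hKU (hball u hu)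
    -- derivative of G
    have hD : ∀ x : ℝ, |x| ≤ 2*a → HasDerivAt (fun u => 2*E - F (κ - ε*u) * u^2)
        (ε * deriv F (κ - ε*x) * x^2 - 2*x*F (κ - ε*x)) x := by
      intro x hx
      have hdF : HasDerivAt F (deriv F (κ - ε*x)) (κ - ε*x) :=
        ((hF.differentiableOn one_ne_zero).differentiableAt (hU.mem_nhds (hUin x hx))).hasDerivAt
      have hg : HasDerivAt (fun u : ℝ => κ - ε*u) (-ε) x := by
        simpa using ((hasDerivAt_id x).const_mul ε).const_sub κ
      have hcomp := hdF.comp x hg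
      have hmul := hcomp.mul (hasDerivAt_pow 2 x)
      have hfinal := hmul.const_sub (2*E)
      have heqv : ε * deriv F (κ - ε*x) * x^2 - 2*x*F (κ - ε*x)
          = -(deriv F (κ - ε*x) * -ε * x^2 + (F ∘ fun u => κ - ε*u) x * ((2:ℕ) * x^(2-1))) := by
        simp only [Function.comp_apply]
        push_cast
        ring
      rw [heqv]
      exact hfinal
    -- bound on derivative in the right turning region
    have hDub : ∀ x : ℝ, a - a/4 ≤ x → x ≤ a + a/4 →
        ε * deriv F (κ - ε*x) * x^2 - 2*x*F (κ - ε*x) ≤ -c₁ := by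
      intro x h1 h2
      have hx2a : |x| ≤ 2*a := abs_le.2 ⟨by linarith, by linarith⟩
      have hFgex : ρF ≤ F (κ - ε*x) := isMinOn_iff.1 hxFmin _ (hball x hx2a)
      have hF'le : |deriv F (κ - ε*x)| ≤ M := by
        have := hM _ (hball x hx2a); rwa [Real.norm_eq_abs] at this
      have hεs : |ε| < a * ρF / (8*a^2*M + 1) :=
        lt_of_lt_of_le hs (le_trans (min_le_right _ _) (min_le_right _ _))
      have hεs' : |ε| * (8*a^2*M + 1) < a * ρF := (lt_div_iff₀ (by positivity)).1 hεs
      have hx2 : x^2 ≤ 4*a^2 := by nlinarith [sq_abs x, abs_nonneg x]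
      have e2 : |ε * deriv F (κ - ε*x) * x^2| = |ε| * |deriv F (κ - ε*x)| * x^2 := by
        rw [abs_mul, abs_mul, abs_of_nonneg (sq_nonneg x)]
      have e3 : |ε| * |deriv F (κ - ε*x)| * x^2 ≤ |ε| * M * (4*a^2) :=
        mul_le_mul (mul_le_mul_of_nonneg_left hF'le (abs_nonneg ε)) hx2 (sq_nonneg x)
          (mul_nonneg (abs_nonneg ε) hM0)
      have ht1 : ε * deriv F (κ - ε*x) * x^2 ≤ |ε| * M * (4*a^2) := by
        have e1 := le_abs_self (ε * deriv F (κ - ε*x) * x^2)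
        linarith [e1, e2.le, e2.ge, e3]
      have hx34 : 3*a/4 ≤ x := by linarith
      have ht2 : (3*a/4) * ρF ≤ x * F (κ - ε*x) :=
        mul_le_mul hx34 hFgex hρF.le (by linarith)
      have ht3 : |ε| * M * (4*a^2) ≤ a * ρF / 2 := by
        have e1 : |ε| * (8*a^2*M) ≤ |ε| * (8*a^2*M + 1) :=
          mul_le_mul_of_nonneg_left (by linarith) (abs_nonneg ε)
        linarith [e1, hεs']
      have hc₁' : c₁ = a * ρF / 2 := hc₁_def
      linarith
    -- bound on derivative in the left turning region
    have hDlb : ∀ x : ℝ, -a - a/4 ≤ x → x ≤ -a + a/4 →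
        c₁ ≤ ε * deriv F (κ - ε*x) * x^2 - 2*x*F (κ - ε*x) := by
      intro x h1 h2
      have hx2a : |x| ≤ 2*a := abs_le.2 ⟨by linarith, by linarith⟩
      have hFgex : ρF ≤ F (κ - ε*x) := isMinOn_iff.1 hxFmin _ (hball x hx2a)
      have hF'le : |deriv F (κ - ε*x)| ≤ M := by
        have := hM _ (hball x hx2a); rwa [Real.norm_eq_abs] at this
      have hεs : |ε| < a * ρF / (8*a^2*M + 1) :=
        lt_of_lt_of_le hs (le_trans (min_le_right _ _) (min_le_right _ _))
      have hεs' : |ε| * (8*a^2*M + 1) < a * ρF := (lt_div_iff₀ (by positivity)).1 hεs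
      have hx2 : x^2 ≤ 4*a^2 := by nlinarith [sq_abs x, abs_nonneg x]
      have e2 : |ε * deriv F (κ - ε*x) * x^2| = |ε| * |deriv F (κ - ε*x)| * x^2 := by
        rw [abs_mul, abs_mul, abs_of_nonneg (sq_nonneg x)]
      have e3 : |ε| * |deriv F (κ - ε*x)| * x^2 ≤ |ε| * M * (4*a^2) :=
        mul_le_mul (mul_le_mul_of_nonneg_left hF'le (abs_nonneg ε)) hx2 (sq_nonneg x)
          (mul_nonneg (abs_nonneg ε) hM0)
      have ht1 : -(|ε| * M * (4*a^2)) ≤ ε * deriv F (κ - ε*x) * x^2 := by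
        have e1 := neg_abs_le (ε * deriv F (κ - ε*x) * x^2)
        linarith [e1, e2.le, e2.ge, e3]
      have hx34 : 3*a/4 ≤ -x := by linarith
      have ht2 : (3*a/4) * ρF ≤ (-x) * F (κ - ε*x) :=
        mul_le_mul hx34 hFgex hρF.le (by linarith)
      have ht3 : |ε| * M * (4*a^2) ≤ a * ρF / 2 := by
        have e1 : |ε| * (8*a^2*M) ≤ |ε| * (8*a^2*M + 1) :=
          mul_le_mul_of_nonneg_left (by linarith) (abs_nonneg ε)
        linarith [e1, hεs']
      have hc₁' : c₁ = a * ρF / 2 := hc₁_def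
      linarith [ht1, ht2, ht3, mul_pos ha hρF]
    -- the right region lower bound for G
    have hRight : ∀ u, a - a/4 ≤ u → u ≤ Ap ε →
        c₁ * (Ap ε - u) ≤ 2*E - F (κ - ε*u) * u^2 := by
      intro u h1 h2
      rcases eq_or_lt_of_le h2 with rfl | hlt2
      · rw [sub_self, mul_zero, hr1]
      · have hcont : ContinuousOn (fun v => 2*E - F (κ - ε*v) * v^2) (Set.Icc u (Ap ε)) := by
          intro x hx
          have hx2a : |x| ≤ 2*a := abs_le.2 ⟨by linarith [hx.1], by linarith [hx.2]⟩
          exact (hD x hx2a).continuousAt.continuousWithinAt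
        obtain ⟨ξ, hξ, hsl⟩ := exists_hasDerivAt_eq_slope
          (fun v => 2*E - F (κ - ε*v) * v^2)
          (fun x => ε * deriv F (κ - ε*x) * x^2 - 2*x*F (κ - ε*x)) hlt2 hcont
          (fun x hx => hD x (abs_le.2 ⟨by linarith [hx.1], by linarith [hx.2]⟩))
        have hb := hDub ξ (by linarith [hξ.1]) (by linarith [hξ.2])
        rw [hsl] at hb
        have hb' : (2*E - F (κ - ε*(Ap ε)) * (Ap ε)^2 - (2*E - F (κ - ε*u) * u^2)) / (Ap ε - u)
            ≤ -c₁ := hb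
        rw [hr1] at hb'
        have hpos : 0 < Ap ε - u := by linarith
        rw [div_le_iff₀ hpos] at hb'
        linarith
    -- the left region lower bound for G
    have hLeft : ∀ u, Am ε ≤ u → u ≤ -a + a/4 →
        c₁ * (u - Am ε) ≤ 2*E - F (κ - ε*u) * u^2 := by
      intro u h1 h2
      rcases eq_or_lt_of_le h1 with heq | hlt1
      · rw [← heq, sub_self, mul_zero, hr2]
      · have hcont : ContinuousOn (fun v => 2*E - F (κ - ε*v) * v^2) (Set.Icc (Am ε) u) := by
          intro x hx
          have hx2a : |x| ≤ 2*a := abs_le.2 ⟨by linarith [hx.1], by linarith [hx.2]⟩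
          exact (hD x hx2a).continuousAt.continuousWithinAt
        obtain ⟨ξ, hξ, hsl⟩ := exists_hasDerivAt_eq_slope
          (fun v => 2*E - F (κ - ε*v) * v^2)
          (fun x => ε * deriv F (κ - ε*x) * x^2 - 2*x*F (κ - ε*x)) hlt1 hcont
          (fun x hx => hD x (abs_le.2 ⟨by linarith [hx.1], by linarith [hx.2]⟩))
        have hb := hDlb ξ (by linarith [hξ.1]) (by linarith [hξ.2])
        rw [hsl] at hb
        have hb' : c₁ ≤ (2*E - F (κ - ε*u) * u^2 - (2*E - F (κ - ε*(Am ε)) * (Am ε)^2)) / (u - Am ε)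
            := hb
        rw [hr2] at hb'
        have hpos : 0 < u - Am ε := by linarith
        rw [le_div_iff₀ hpos] at hb'
        linarith
    -- the middle region lower bound for G
    have hMid : ∀ u, -(a - a/4) ≤ u → u ≤ a - a/4 →
        c₂ ≤ 2*E - F (κ - ε*u) * u^2 := by
      intro u h1 h2
      have hu2a : |u| ≤ 2*a := abs_le.2 ⟨by linarith, by linarith⟩
      have hdist : dist (κ - ε*u) κ < ρ := by
        rw [Real.dist_eq, show κ - ε*u - κ = -(ε*u) by ring, abs_neg, abs_mul]
        have h1' : |ε| < ρ/(2*a) :=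
          lt_of_lt_of_le hs (le_trans (min_le_right _ _) (min_le_left _ _))
        have h2' : |ε| * |u| ≤ |ε| * (2*a) := mul_le_mul_of_nonneg_left hu2a (abs_nonneg ε)
        have h3' : |ε| * (2*a) < ρ := (lt_div_iff₀ (by positivity)).1 h1'
        linarith
      have hFlt : F (κ - ε*u) < F κ + 7 * F κ / 20 := by
        have hd := hρball hdist
        rw [Real.dist_eq] at hd
        have h5 := (abs_lt.1 hd).2
        have hη' : η = 7 * F κ / 20 := hη_def
        linarith
      have hu2 : u^2 ≤ (3*a/4)^2 := by
        have hp : 0 ≤ (a - a/4 - u) * (a - a/4 + u) :=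
          mul_nonneg (by linarith) (by linarith)
        linarith [hp]
      have hmulb : F (κ - ε*u) * u^2 ≤ (F κ + 7 * F κ / 20) * (3*a/4)^2 :=
        mul_le_mul hFlt.le hu2 (sq_nonneg u) (by linarith)
      have hc₂' : c₂ = 7 * F κ * a ^ 2 / 32 := hc₂_def
      linarith [ha2, hmulb, mul_pos hFκ (mul_pos ha ha)]
    -- assemble
    refine ⟨hlt, ?_, ?_, ?_, ?_, hr1⟩
    · intro x hx
      have h1 : ContinuousAt (fun u : ℝ => κ - ε * u) x := by fun_prop
      have h2 : ContinuousAt (fun u : ℝ => R (κ - ε * u)) x :=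
        ContinuousAt.comp (g := R) (f := fun u : ℝ => κ - ε * u) (x := x)
          (hR.continuousOn.continuousAt (hU.mem_nhds (hUin x (habs x hx)))) h1
      exact h2.continuousWithinAt
    · intro x hx
      exact (hD x (habs x hx)).continuousAt.continuousWithinAt
    · intro u hu
      exact isMinOn_iff.1 hxRmin _ (hball u (habs u hu))
    · intro u hu
      rcases le_total u (-(a - a/4)) with hc1 | hc1
      · have hGlb := hLeft u hu.1 (by linarith)
        have h1 : 0 ≤ u - Am ε := by linarith [hu.1]
        have h2 : Ap ε - u ≤ 3*a := by linarith [hu.1]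
        have s1 : c₀ * (Ap ε - u) ≤ c₁ := by
          nlinarith [mul_le_mul_of_nonneg_left h2 hc₀.le, hc01]
        have s2 := mul_le_mul_of_nonneg_right s1 h1
        nlinarith [hGlb, s2]
      · rcases le_total u (a - a/4) with hc2 | hc2
        · have hGlb := hMid u (by linarith) hc2
          have h1 : 0 ≤ u - Am ε := by linarith [hu.1]
          have h1' : u - Am ε ≤ 3*a := by linarith
          have h2 : 0 ≤ Ap ε - u := by linarith [hu.2]
          have h2' : Ap ε - u ≤ 3*a := by linarith
          have sprod : (Ap ε - u) * (u - Am ε) ≤ 9*a^2 := by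
            nlinarith [mul_le_mul h2' h1' h1 (show (0:ℝ) ≤ 3*a by linarith)]
          have s1 : c₀ * ((Ap ε - u) * (u - Am ε)) ≤ c₀ * (9*a^2) :=
            mul_le_mul_of_nonneg_left sprod hc₀.le
          linarith [hc02, hGlb, s1]
        · have hGlb := hRight u hc2 hu.2
          have h1 : 0 ≤ Ap ε - u := by linarith [hu.2]
          have h2 : u - Am ε ≤ 3*a := by linarith [hu.2]
          have s1 : c₀ * (u - Am ε) ≤ c₁ := by
            nlinarith [mul_le_mul_of_nonneg_left h2 hc₀.le, hc01]
          have s2 := mul_le_mul_of_nonneg_right s1 h1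
          nlinarith [hGlb, s2]
  -- apply the substitution lemma eventually
  have main : ∀ᶠ ε in 𝓝 (0:ℝ),
      IntervalIntegrable
        (fun u => (Real.sqrt (R (κ - ε * u)) * Real.sqrt (2 * E - F (κ - ε * u) * u ^ 2))⁻¹)
        volume (Am ε) (Ap ε)
      ∧ AEStronglyMeasurable
          (fun t => ((Ap ε - Am ε)/2) *
            (Real.sqrt (R (κ - ε * ((Ap ε + Am ε)/2 + (Ap ε - Am ε)/2 * t))) *
              Real.sqrt (2 * E - F (κ - ε * ((Ap ε + Am ε)/2 + (Ap ε - Am ε)/2 * t)) *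
                ((Ap ε + Am ε)/2 + (Ap ε - Am ε)/2 * t) ^ 2))⁻¹)
          (volume.restrict (Set.uIoc (-1:ℝ) 1))
      ∧ (∀ t ∈ Set.uIoc (-1:ℝ) 1,
          ‖((Ap ε - Am ε)/2) *
            (Real.sqrt (R (κ - ε * ((Ap ε + Am ε)/2 + (Ap ε - Am ε)/2 * t))) *
              Real.sqrt (2 * E - F (κ - ε * ((Ap ε + Am ε)/2 + (Ap ε - Am ε)/2 * t)) *
                ((Ap ε + Am ε)/2 + (Ap ε - Am ε)/2 * t) ^ 2))⁻¹‖
            ≤ (Real.sqrt ρR * Real.sqrt c₀)⁻¹ * (Real.sqrt (1 - t^2))⁻¹)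
      ∧ ((∫ u in (Am ε)..(Ap ε),
            (Real.sqrt (R (κ - ε * u)) * Real.sqrt (2 * E - F (κ - ε * u) * u ^ 2))⁻¹)
          = ∫ t in (-1:ℝ)..1, ((Ap ε - Am ε)/2) *
              (Real.sqrt (R (κ - ε * ((Ap ε + Am ε)/2 + (Ap ε - Am ε)/2 * t))) *
                Real.sqrt (2 * E - F (κ - ε * ((Ap ε + Am ε)/2 + (Ap ε - Am ε)/2 * t)) *
                  ((Ap ε + Am ε)/2 + (Ap ε - Am ε)/2 * t) ^ 2))⁻¹) := by
    filter_upwards [key] with ε hk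
    obtain ⟨hlt, hRcont, hGcont, hRge', hGlow, hGP⟩ := hk
    exact aux_per (fun u => R (κ - ε * u)) (fun u => 2 * E - F (κ - ε * u) * u ^ 2)
      c₀ ρR (Am ε) (Ap ε) hlt hc₀ hρR hRcont hGcont hRge' hGlow hGP
  refine ⟨main.mono fun ε h => h.1, ?_⟩
  -- limits
  have hRcκ : ContinuousAt R κ := hR.continuousOn.continuousAt (hU.mem_nhds hκ)
  have hFcκ : ContinuousAt F κ := hF.continuousOn.continuousAt (hU.mem_nhds hκ)
  have hone : ∀ᵐ t : ℝ ∂(volume : Measure ℝ), t ≠ (1:ℝ) := by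
    have h1 : {t : ℝ | ¬ t ≠ 1} = {1} := by ext x; simp
    rw [ae_iff, h1]
    exact measure_singleton 1
  have hlim : ∀ᵐ t : ℝ ∂(volume : Measure ℝ), t ∈ Set.uIoc (-1:ℝ) 1 →
      Tendsto (fun ε => ((Ap ε - Am ε)/2) *
        (Real.sqrt (R (κ - ε * ((Ap ε + Am ε)/2 + (Ap ε - Am ε)/2 * t))) *
          Real.sqrt (2 * E - F (κ - ε * ((Ap ε + Am ε)/2 + (Ap ε - Am ε)/2 * t)) *
            ((Ap ε + Am ε)/2 + (Ap ε - Am ε)/2 * t) ^ 2))⁻¹)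
        (𝓝 0) (𝓝 ((Real.sqrt (R κ * F κ))⁻¹ * (Real.sqrt (1 - t^2))⁻¹)) := by
    filter_upwards [hone] with t ht1 htI
    have htI' : t ∈ Set.Ioc (-1:ℝ) 1 := by
      rwa [Set.uIoc_of_le (by norm_num : (-1:ℝ) ≤ 1)] at htI
    have ht2 : t < 1 := lt_of_le_of_ne htI'.2 ht1
    have ht3 : -1 < t := htI'.1
    have hmt : Tendsto (fun ε => (Ap ε - Am ε)/2) (𝓝 0) (𝓝 a) := by
      have h := (hApt.sub hAmt).div_const 2
      rw [show (a - -a)/2 = a from by ring] at h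
      exact h
    have hct : Tendsto (fun ε => (Ap ε + Am ε)/2) (𝓝 0) (𝓝 (0:ℝ)) := by
      have h := (hApt.add hAmt).div_const 2
      rw [show (a + -a)/2 = (0:ℝ) from by ring] at h
      exact h
    have hut : Tendsto (fun ε => (Ap ε + Am ε)/2 + (Ap ε - Am ε)/2 * t) (𝓝 0) (𝓝 (a * t)) := by
      have h := hct.add (hmt.mul_const t)
      rwa [zero_add] at h
    have hxt : Tendsto (fun ε : ℝ => κ - ε * ((Ap ε + Am ε)/2 + (Ap ε - Am ε)/2 * t))
        (𝓝 0) (𝓝 κ) := by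
      have hid : Tendsto (fun ε : ℝ => ε) (𝓝 (0:ℝ)) (𝓝 (0:ℝ)) := tendsto_id
      have h := hid.mul hut
      rw [zero_mul] at h
      have hconst : Tendsto (fun _ : ℝ => κ) (𝓝 (0:ℝ)) (𝓝 κ) := tendsto_const_nhds
      have h2 := hconst.sub h
      rwa [sub_zero] at h2
    have hRt : Tendsto (fun ε : ℝ => R (κ - ε * ((Ap ε + Am ε)/2 + (Ap ε - Am ε)/2 * t)))
        (𝓝 0) (𝓝 (R κ)) := hRcκ.tendsto.comp hxt
    have hFt : Tendsto (fun ε : ℝ => F (κ - ε * ((Ap ε + Am ε)/2 + (Ap ε - Am ε)/2 * t)))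
        (𝓝 0) (𝓝 (F κ)) := hFcκ.tendsto.comp hxt
    have hGt : Tendsto (fun ε : ℝ => 2 * E - F (κ - ε * ((Ap ε + Am ε)/2 + (Ap ε - Am ε)/2 * t)) *
        ((Ap ε + Am ε)/2 + (Ap ε - Am ε)/2 * t) ^ 2)
        (𝓝 0) (𝓝 (2 * E - F κ * (a * t) ^ 2)) :=
      tendsto_const_nhds.sub (hFt.mul (hut.pow 2))
    have hsRt : Tendsto (fun ε : ℝ =>
        Real.sqrt (R (κ - ε * ((Ap ε + Am ε)/2 + (Ap ε - Am ε)/2 * t))))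
        (𝓝 0) (𝓝 (Real.sqrt (R κ))) := (Real.continuous_sqrt.continuousAt).tendsto.comp hRt
    have hsGt : Tendsto (fun ε : ℝ =>
        Real.sqrt (2 * E - F (κ - ε * ((Ap ε + Am ε)/2 + (Ap ε - Am ε)/2 * t)) *
          ((Ap ε + Am ε)/2 + (Ap ε - Am ε)/2 * t) ^ 2))
        (𝓝 0) (𝓝 (Real.sqrt (2 * E - F κ * (a * t) ^ 2))) :=
      (Real.continuous_sqrt.continuousAt).tendsto.comp hGt
    have hFt2 : F κ * (a*t)^2 = 2*E*t^2 := by linear_combination t^2 * ha2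
    have htt : t^2 < 1 := by nlinarith
    have hpos2 : 0 < 2*E - F κ * (a*t)^2 := by
      rw [hFt2]; nlinarith [mul_pos hE (show (0:ℝ) < 1 - t^2 by linarith)]
    have hdenpos : 0 < Real.sqrt (R κ) * Real.sqrt (2*E - F κ * (a*t)^2) :=
      mul_pos (Real.sqrt_pos.2 hRκ) (Real.sqrt_pos.2 hpos2)
    have hfin := hmt.mul ((hsRt.mul hsGt).inv₀ (ne_of_gt hdenpos))
    have hval : a * (Real.sqrt (R κ) * Real.sqrt (2*E - F κ * (a*t)^2))⁻¹
        = (Real.sqrt (R κ * F κ))⁻¹ * (Real.sqrt (1 - t^2))⁻¹ := by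
      have e1 : 2*E - F κ * (a*t)^2 = (2*E) * (1 - t^2) := by linear_combination (-t^2) * ha2
      rw [e1, Real.sqrt_mul (by linarith : (0:ℝ) ≤ 2*E), Real.sqrt_mul hRκ.le,
        ha_def, Real.sqrt_div (by linarith : (0:ℝ) ≤ 2*E) (F κ)]
      have h2E : Real.sqrt (2*E) ≠ 0 := ne_of_gt (Real.sqrt_pos.2 (by linarith))
      have hFs : Real.sqrt (F κ) ≠ 0 := ne_of_gt (Real.sqrt_pos.2 hFκ)
      have hRs : Real.sqrt (R κ) ≠ 0 := ne_of_gt (Real.sqrt_pos.2 hRκ)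
      have hts : Real.sqrt (1 - t^2) ≠ 0 :=
        ne_of_gt (Real.sqrt_pos.2 (by linarith))
      field_simp
    rw [← hval]
    exact hfin
  have hDCT := intervalIntegral.tendsto_integral_filter_of_dominated_convergence
    (μ := (volume : Measure ℝ)) (a := (-1:ℝ)) (b := (1:ℝ)) (l := 𝓝 (0:ℝ))
    (F := fun ε t => ((Ap ε - Am ε)/2) *
      (Real.sqrt (R (κ - ε * ((Ap ε + Am ε)/2 + (Ap ε - Am ε)/2 * t))) *
        Real.sqrt (2 * E - F (κ - ε * ((Ap ε + Am ε)/2 + (Ap ε - Am ε)/2 * t)) *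
          ((Ap ε + Am ε)/2 + (Ap ε - Am ε)/2 * t) ^ 2))⁻¹)
    (f := fun t => (Real.sqrt (R κ * F κ))⁻¹ * (Real.sqrt (1 - t^2))⁻¹)
    (fun t => (Real.sqrt ρR * Real.sqrt c₀)⁻¹ * (Real.sqrt (1 - t^2))⁻¹)
    (main.mono fun ε h => h.2.1)
    (main.mono fun ε h => ae_of_all _ h.2.2.1)
    (aux_II.const_mul _)
    hlim
  have hfinal := hDCT.const_mul (2:ℝ)
  have hlimval : 2 * ∫ t in (-1:ℝ)..1, (Real.sqrt (R κ * F κ))⁻¹ * (Real.sqrt (1 - t^2))⁻¹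
      = 2 * π / Real.sqrt (R κ * F κ) := by
    rw [intervalIntegral.integral_const_mul]
    have : ∫ t in (-1:ℝ)..1, (Real.sqrt (1 - t^2))⁻¹ = π := by
      simpa [sq] using aux_int
    rw [this, div_eq_mul_inv]
    ring
  rw [← hlimval]
  refine Filter.Tendsto.congr' ?_ hfinal
  have hEq : ∀ᶠ ε in 𝓝 (0:ℝ),
      (2 * ∫ t in (-1:ℝ)..1, ((Ap ε - Am ε)/2) *
        (Real.sqrt (R (κ - ε * ((Ap ε + Am ε)/2 + (Ap ε - Am ε)/2 * t))) *
          Real.sqrt (2 * E - F (κ - ε * ((Ap ε + Am ε)/2 + (Ap ε - Am ε)/2 * t)) *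
            ((Ap ε + Am ε)/2 + (Ap ε - Am ε)/2 * t) ^ 2))⁻¹)
      = 2 * ∫ u in (Am ε)..(Ap ε),
          (Real.sqrt (R (κ - ε * u)) * Real.sqrt (2 * E - F (κ - ε * u) * u ^ 2))⁻¹ :=
    main.mono fun ε h => by rw [h.2.2.2]
  exact hEq
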